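/- arXiv:1910.02542 — 7 statements merged into one kernel-verified Lean document; each statement's English description precedes it below -/
import Mathlib

section
/- For all α₁, α₂ > 0, Matusita's overlap coefficient of the two inverse Lomax densities equals ∫₀^∞ √(f(x; α₁)·f(x; α₂)) dx = 2√R/(R + 1), where R = α₁/α₂. -/
open MeasureTheory

/-- The inverse Lomax density with shape parameter `α`. -/
noncomputable def invLomaxPdf (α x : ℝ) : ℝ :=
  (1 / (α * x ^ 2)) * (1 + 1 / x) ^ (-(1 + 1 / α))

/-- Matusita's overlap coefficient of two inverse Lomax densities equals
`2√R/(R+1)` where `R = α₁/α₂`. -/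
theorem invLomax_matusita (α₁ α₂ : ℝ) (h₁ : 0 < α₁) (h₂ : 0 < α₂)
    (R : ℝ) (hR : R = α₁ / α₂) :
    ∫ x in Set.Ioi (0 : ℝ), Real.sqrt (invLomaxPdf α₁ x * invLomaxPdf α₂ x)
      = 2 * Real.sqrt R / (R + 1) := by
  obtain ⟨s, hs⟩ : ∃ s : ℝ, s = 1 / α₁ + 1 / α₂ := ⟨_, rfl⟩
  have hspos : 0 < s := by rw [hs]; positivity
  obtain ⟨c, hc⟩ : ∃ c : ℝ, c = 1 + s / 2 := ⟨_, rfl⟩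
  have hc1 : 1 < c := by rw [hc]; linarith
  -- change of variables: u = 1 + 1/x
  have key : ∫ x in Set.Ioi (1 : ℝ), x ^ (-c)
      = ∫ x in Set.Ioi (0 : ℝ), |(-(x ^ 2)⁻¹)| • ((1 + 1 / x) ^ (-c)) := by
    have himg : (fun x : ℝ => 1 + 1 / x) '' Set.Ioi 0 = Set.Ioi 1 := by
      ext u
      constructor
      · rintro ⟨x, hx, rfl⟩
        simp only [Set.mem_Ioi] at hx ⊢
        have : 0 < 1 / x := by positivity
        linarith
      · intro hu
        simp only [Set.mem_Ioi] at hu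
        have hu1 : 0 < u - 1 := by linarith
        refine ⟨1 / (u - 1), by simp only [Set.mem_Ioi]; positivity, ?_⟩
        have : u - 1 ≠ 0 := by linarith
        field_simp
        ring
    rw [← himg]
    apply integral_image_eq_integral_abs_deriv_smul measurableSet_Ioi
    · intro x hx
      have hx0 : x ≠ 0 := ne_of_gt hx
      have : HasDerivAt (fun x : ℝ => 1 + 1 / x) (-(x ^ 2)⁻¹) x := by
        simpa using (hasDerivAt_inv hx0).const_add 1
      exact this.hasDerivWithinAt
    · intro a ha b hb hab
      have ha0 : a ≠ 0 := ne_of_gt (Set.mem_Ioi.mp ha)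
      have hb0 : b ≠ 0 := ne_of_gt (Set.mem_Ioi.mp hb)
      have h' : 1 / a = 1 / b := by linarith [hab]
      field_simp at h'
      exact h'.symm
  -- evaluate the integral on Ioi 1
  have hval : ∫ x in Set.Ioi (1 : ℝ), x ^ (-c) = 1 / (c - 1) := by
    rw [integral_Ioi_rpow_of_lt (by linarith) one_pos, Real.one_rpow,
      show -c + 1 = -(c - 1) by ring, neg_div_neg_eq]
  -- rewrite the integrand
  have hint : Set.EqOn
      (fun x => Real.sqrt (invLomaxPdf α₁ x * invLomaxPdf α₂ x))
      (fun x => (Real.sqrt (α₁ * α₂))⁻¹ * (|(-(x ^ 2)⁻¹)| • ((1 + 1 / x) ^ (-c))))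
      (Set.Ioi (0 : ℝ)) := by
    intro x hx
    have hx0 : (0 : ℝ) < x := hx
    have hb : (0 : ℝ) < 1 + 1 / x := by positivity
    have h1 : invLomaxPdf α₁ x * invLomaxPdf α₂ x
        = (α₁ * α₂ * x ^ 4)⁻¹ * (1 + 1 / x) ^ (-(2 * c)) := by
      unfold invLomaxPdf
      have he : -(1 + 1 / α₁) + -(1 + 1 / α₂) = -(2 * c) := by
        simp only [hc, hs]; ring
      calc 1 / (α₁ * x ^ 2) * (1 + 1 / x) ^ (-(1 + 1 / α₁)) *
            (1 / (α₂ * x ^ 2) * (1 + 1 / x) ^ (-(1 + 1 / α₂)))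
          = (1 / (α₁ * x ^ 2) * (1 / (α₂ * x ^ 2))) *
            ((1 + 1 / x) ^ (-(1 + 1 / α₁)) * (1 + 1 / x) ^ (-(1 + 1 / α₂))) := by ring
        _ = (α₁ * α₂ * x ^ 4)⁻¹ * (1 + 1 / x) ^ (-(2 * c)) := by
            rw [← Real.rpow_add hb, he, one_div, one_div, ← mul_inv]
            ring
    have hsq : Real.sqrt ((1 + 1 / x) ^ (-(2 * c))) = (1 + 1 / x) ^ (-c) := by
      rw [Real.sqrt_eq_rpow, ← Real.rpow_mul hb.le]
      congr 1
      ring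
    simp only [h1]
    rw [Real.sqrt_mul (by positivity), hsq, Real.sqrt_inv]
    have hx4 : Real.sqrt (α₁ * α₂ * x ^ 4) = Real.sqrt (α₁ * α₂) * x ^ 2 := by
      rw [Real.sqrt_mul (by positivity), show x ^ 4 = (x ^ 2) ^ 2 by ring,
        Real.sqrt_sq (by positivity)]
    rw [hx4, abs_neg, abs_of_pos (by positivity : (0:ℝ) < (x ^ 2)⁻¹), smul_eq_mul,
      mul_inv]
    ring
  rw [setIntegral_congr_fun measurableSet_Ioi hint, integral_const_mul, ← key, hval]
  -- final algebra
  have ha : Real.sqrt α₁ ^ 2 = α₁ := Real.sq_sqrt h₁.le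
  have hb : Real.sqrt α₂ ^ 2 = α₂ := Real.sq_sqrt h₂.le
  have hc2 : c - 1 = s / 2 := by simp [hc]
  have hap : 0 < Real.sqrt α₁ := Real.sqrt_pos.mpr h₁
  have hbp : 0 < Real.sqrt α₂ := Real.sqrt_pos.mpr h₂
  rw [hc2, hR, Real.sqrt_div h₁.le, Real.sqrt_mul h₁.le, hs, ← ha, ← hb]
  have hR1 : Real.sqrt α₁ ^ 2 / Real.sqrt α₂ ^ 2 + 1 ≠ 0 := by positivity
  field_simp
  rw [Real.sqrt_sq hap.le]
  ring
end

section
/- For all α₁, α₂ > 0 with α₁ ≠ α₂, Weitzman's overlap coefficient of the two inverse Lomax densities equals ∫₀^∞ min(f(x; α₁), f(x; α₂)) dx = 1 − R^(1/(1−R))·|1 − 1/R|, where R = α₁/α₂. -/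
open MeasureTheory Set Filter Real Topology

/-- The inverse Lomax CDF (set to `0` for `x ≤ 0`). -/
noncomputable def invLomaxCdf (α x : ℝ) : ℝ :=
  if 0 < x then (1 + 1 / x) ^ (-(1 / α)) else 0

lemma invLomaxPdf_nonneg {α x : ℝ} (hα : 0 < α) (hx : 0 < x) :
    0 ≤ invLomaxPdf α x := by
  unfold invLomaxPdf
  have h0 : (0:ℝ) < 1 + 1 / x := by positivity
  positivity

lemma invLomax_hasDerivAt {α x : ℝ} (hα : 0 < α) (hx : 0 < x) :
    HasDerivAt (invLomaxCdf α) (invLomaxPdf α x) x := by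
  have h0 : (0:ℝ) < 1 + 1 / x := by positivity
  have h1 : HasDerivAt (fun y : ℝ => 1 + 1 / y) (-(1 / x ^ 2)) x := by
    simpa [one_div] using (hasDerivAt_inv hx.ne').const_add (1:ℝ)
  have h2 := h1.rpow_const (p := -(1/α)) (Or.inl h0.ne')
  have h3 : HasDerivAt (fun y : ℝ => (1 + 1 / y) ^ (-(1/α))) (invLomaxPdf α x) x := by
    convert h2 using 1
    rw [invLomaxPdf, show -(1/α) - 1 = -(1 + 1/α) by ring]
    ring
  refine h3.congr_of_eventuallyEq ?_
  filter_upwards [Ioi_mem_nhds hx] with y hy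
  simp only [invLomaxCdf, if_pos (mem_Ioi.mp hy)]

lemma invLomaxCdf_tendsto_atTop {α : ℝ} : Tendsto (invLomaxCdf α) atTop (𝓝 1) := by
  have h : Tendsto (fun x : ℝ => 1 + 1 / x) atTop (𝓝 1) := by
    simpa [one_div] using tendsto_const_nhds.add tendsto_inv_atTop_zero (f := fun x : ℝ => (1:ℝ))
  have hc : ContinuousAt (fun y : ℝ => y ^ (-(1/α))) 1 :=
    Real.continuousAt_rpow_const 1 _ (Or.inl one_ne_zero)
  have h2 : Tendsto (fun x : ℝ => (1 + 1/x) ^ (-(1/α))) atTop (𝓝 1) := by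
    simpa [Function.comp_def] using hc.tendsto.comp h
  refine h2.congr' ?_
  filter_upwards [eventually_gt_atTop (0:ℝ)] with x hx
  simp only [invLomaxCdf, if_pos hx]

lemma invLomaxCdf_tendsto_zero {α : ℝ} (hα : 0 < α) :
    Tendsto (invLomaxCdf α) (nhdsWithin 0 (Ioi 0)) (𝓝 0) := by
  have h : Tendsto (fun x : ℝ => 1 + 1 / x) (nhdsWithin 0 (Ioi 0)) atTop := by
    simpa [one_div] using tendsto_atTop_add_const_left _ (1:ℝ) tendsto_inv_nhdsGT_zero
  have h2 := (tendsto_rpow_neg_atTop (by positivity : (0:ℝ) < 1/α)).comp h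
  refine h2.congr' ?_
  filter_upwards [self_mem_nhdsWithin] with x hx
  simp only [invLomaxCdf, if_pos (mem_Ioi.mp hx), Function.comp]

lemma invLomaxPdf_le {a b x : ℝ} (ha : 0 < a) (hb : 0 < b) (hx : 0 < x)
    (h : b * (1 + 1/x) ^ ((a - b)/(a*b)) ≤ a) :
    invLomaxPdf a x ≤ invLomaxPdf b x := by
  have h0 : (0:ℝ) < 1 + 1/x := by positivity
  have hsplit : (1 + 1/x) ^ (-(1 + 1/a))
      = (1 + 1/x) ^ ((a-b)/(a*b)) * (1 + 1/x) ^ (-(1 + 1/b)) := by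
    rw [← Real.rpow_add h0]
    congr 1
    field_simp
    ring
  rw [invLomaxPdf, invLomaxPdf, hsplit]
  have hT : 0 ≤ (1 + 1/x) ^ (-(1 + 1/b)) := (Real.rpow_pos_of_pos h0 _).le
  have hS : 0 ≤ (1 + 1/x) ^ ((a-b)/(a*b)) := (Real.rpow_pos_of_pos h0 _).le
  rw [div_mul_eq_mul_div, div_mul_eq_mul_div, div_le_div_iff₀ (by positivity) (by positivity)]
  nlinarith [mul_le_mul_of_nonneg_left h (mul_nonneg hT (sq_nonneg x))]

lemma invLomaxPdf_integrableOn_Ioc {α c : ℝ} (hα : 0 < α) (hc : 0 < c) :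
    IntegrableOn (invLomaxPdf α) (Ioc 0 c) := by
  have hmeas : ContinuousOn (invLomaxPdf α) (Ioc 0 c) := by
    intro x hx
    have hx0 : 0 < x := hx.1
    have h0 : (0:ℝ) < 1 + 1/x := by positivity
    apply ContinuousAt.continuousWithinAt
    unfold invLomaxPdf
    have c1 : ContinuousAt (fun x : ℝ => 1 + 1/x) x :=
      continuousAt_const.add (continuousAt_const.div continuousAt_id hx0.ne')
    have c2 : ContinuousAt (fun x : ℝ => (1 + 1/x) ^ (-(1 + 1/α))) x :=
      c1.rpow_const (Or.inl h0.ne')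
    have c3 : ContinuousAt (fun x : ℝ => 1/(α * x^2)) x :=
      continuousAt_const.div (continuousAt_const.mul (continuousAt_id.pow 2)) (by positivity)
    exact c3.mul c2
  have hdom : IntegrableOn (fun x : ℝ => (1/α) * x ^ (1/α - 1)) (Ioc 0 c) := by
    have h1 := (intervalIntegral.intervalIntegrable_rpow' (a := 0) (b := c)
      (r := 1/α - 1) (by simp; positivity)).const_mul (1/α)
    rwa [intervalIntegrable_iff_integrableOn_Ioc_of_le hc.le] at h1
  refine hdom.mono' (hmeas.aestronglyMeasurable measurableSet_Ioc) ?_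
  rw [ae_restrict_iff' measurableSet_Ioc]
  refine ae_of_all _ fun x hx => ?_
  have hx0 : 0 < x := hx.1
  rw [Real.norm_of_nonneg (invLomaxPdf_nonneg hα hx0)]
  have hα1 : (0:ℝ) < 1 + 1/α := by positivity
  have h1 : (1 + 1/x) ^ (-(1 + 1/α)) ≤ (1/x) ^ (-(1 + 1/α)) :=
    Real.rpow_le_rpow_of_nonpos (by positivity) (by linarith) (by linarith)
  have h2 : (1/x : ℝ) ^ (-(1 + 1/α)) = x ^ (1 + 1/α) := by
    rw [one_div, Real.inv_rpow hx0.le, Real.rpow_neg hx0.le, inv_inv]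
  calc invLomaxPdf α x ≤ 1/(α*x^2) * x^(1+1/α) := by
        rw [invLomaxPdf]; exact mul_le_mul_of_nonneg_left (h1.trans_eq h2) (by positivity)
    _ = 1/α * x^(1/α - 1) := by
        rw [show (1:ℝ)+1/α = 2 + (1/α - 1) by ring, Real.rpow_add hx0,
            show ((2:ℝ)) = ((2:ℕ):ℝ) by norm_num, Real.rpow_natCast]
        field_simp

lemma invLomax_integral_Ioc {α c : ℝ} (hα : 0 < α) (hc : 0 < c) :
    ∫ x in Ioc (0:ℝ) c, invLomaxPdf α x = invLomaxCdf α c := by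
  have hii : IntervalIntegrable (invLomaxPdf α) volume 0 c :=
    (intervalIntegrable_iff_integrableOn_Ioc_of_le hc.le).mpr (invLomaxPdf_integrableOn_Ioc hα hc)
  have hc0 : invLomaxCdf α 0 = 0 := by simp [invLomaxCdf]
  have hcont : ContinuousOn (invLomaxCdf α) (Icc 0 c) := by
    intro y hy
    rcases eq_or_lt_of_le hy.1 with h0 | h0
    · rw [← h0]
      have h : ContinuousWithinAt (invLomaxCdf α) (Ioi 0) 0 := by
        unfold ContinuousWithinAt
        rw [hc0]
        exact invLomaxCdf_tendsto_zero hα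
      refine h.insert.mono fun z hz => ?_
      rcases eq_or_lt_of_le hz.1 with h | h
      · exact h ▸ mem_insert _ _
      · exact mem_insert_of_mem _ h
    · exact ((invLomax_hasDerivAt hα h0).continuousAt).continuousWithinAt
  have hres := intervalIntegral.integral_eq_sub_of_hasDeriv_right_of_le hc.le hcont
    (fun x hx => (invLomax_hasDerivAt hα hx.1).hasDerivWithinAt) hii
  rw [← intervalIntegral.integral_of_le hc.le, hres, hc0, sub_zero]

lemma invLomax_integrableOn_Ioi {α c : ℝ} (hα : 0 < α) (hc : 0 < c) :
    IntegrableOn (invLomaxPdf α) (Ioi c) :=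
  integrableOn_Ioi_deriv_of_nonneg
    ((invLomax_hasDerivAt hα hc).continuousAt).continuousWithinAt
    (fun x hx => invLomax_hasDerivAt hα (hc.trans hx))
    (fun x hx => invLomaxPdf_nonneg hα (hc.trans hx)) invLomaxCdf_tendsto_atTop

lemma invLomax_integral_Ioi {α c : ℝ} (hα : 0 < α) (hc : 0 < c) :
    ∫ x in Ioi c, invLomaxPdf α x = 1 - invLomaxCdf α c :=
  integral_Ioi_of_hasDerivAt_of_nonneg
    ((invLomax_hasDerivAt hα hc).continuousAt).continuousWithinAt
    (fun x hx => invLomax_hasDerivAt hα (hc.trans hx))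
    (fun x hx => invLomaxPdf_nonneg hα (hc.trans hx)) invLomaxCdf_tendsto_atTop

lemma invLomax_weitzman_aux {a b : ℝ} (hb : 0 < b) (hab : b < a) :
    ∫ x in Ioi (0:ℝ), min (invLomaxPdf a x) (invLomaxPdf b x)
      = 1 + (a/b) ^ (-(a/(a-b))) - (a/b) ^ (-(b/(a-b))) := by
  have ha : 0 < a := hb.trans hab
  have hR1 : 1 < a/b := (one_lt_div hb).mpr hab
  have hR0 : (0:ℝ) < a/b := lt_trans one_pos hR1
  have hd : 0 < a - b := sub_pos.mpr hab
  have he : 0 < a*b/(a-b) := by positivity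
  set t := (a/b) ^ (a*b/(a-b)) with htdef
  have ht1 : 1 < t := (Real.one_lt_rpow_iff_of_pos hR0).mpr (Or.inl ⟨hR1, he⟩)
  set c := 1/(t-1) with hcdef
  have hc : 0 < c := one_div_pos.mpr (by linarith)
  have hct : 1 + 1/c = t := by rw [hcdef, one_div_one_div]; ring
  have hepow : ∀ s : ℝ, t ^ s = (a/b) ^ (a*b/(a-b) * s) := fun s => by
    rw [htdef, ← Real.rpow_mul hR0.le]
  have hmin1 : EqOn (fun x => min (invLomaxPdf a x) (invLomaxPdf b x)) (invLomaxPdf b)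
      (Ioc 0 c) := by
    intro x hx
    have hx0 : 0 < x := hx.1
    have hxt : t ≤ 1 + 1/x := by
      have h := one_div_le_one_div_of_le hx0 hx.2
      linarith
    refine min_eq_right (invLomaxPdf_le hb ha hx0 ?_)
    have hexp : (b - a)/(b*a) = -((a-b)/(a*b)) := by ring
    rw [hexp]
    have h1 : (1+1/x) ^ (-((a-b)/(a*b))) ≤ t ^ (-((a-b)/(a*b))) :=
      Real.rpow_le_rpow_of_nonpos (by linarith) hxt
        (neg_nonpos.mpr (by positivity))
    have h2 : t ^ (-((a-b)/(a*b))) = b/a := by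
      rw [hepow, show a*b/(a-b) * -((a-b)/(a*b)) = -1 by field_simp,
        Real.rpow_neg_one, inv_div]
    calc a * (1+1/x) ^ (-((a-b)/(a*b))) ≤ a * (b/a) := by
          rw [← h2]; exact mul_le_mul_of_nonneg_left h1 ha.le
      _ = b := by field_simp
  have hmin2 : EqOn (fun x => min (invLomaxPdf a x) (invLomaxPdf b x)) (invLomaxPdf a)
      (Ioi c) := by
    intro x hx
    have hx0 : 0 < x := hc.trans hx
    have hxt : 1 + 1/x ≤ t := by
      have h := one_div_le_one_div_of_le hc (le_of_lt hx)
      linarith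
    refine min_eq_left (invLomaxPdf_le ha hb hx0 ?_)
    have h0x : (0:ℝ) < 1 + 1/x := by positivity
    have h1 : (1+1/x) ^ ((a-b)/(a*b)) ≤ t ^ ((a-b)/(a*b)) :=
      Real.rpow_le_rpow h0x.le hxt (by positivity)
    have h2 : t ^ ((a-b)/(a*b)) = a/b := by
      rw [hepow, show a*b/(a-b) * ((a-b)/(a*b)) = 1 by field_simp, Real.rpow_one]
    calc b * (1+1/x) ^ ((a-b)/(a*b)) ≤ b * (a/b) := by
          rw [← h2]; exact mul_le_mul_of_nonneg_left h1 hb.le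
      _ = a := by field_simp
  have hIb : IntegrableOn (fun x => min (invLomaxPdf a x) (invLomaxPdf b x)) (Ioc 0 c) :=
    (invLomaxPdf_integrableOn_Ioc hb hc).congr_fun hmin1.symm measurableSet_Ioc
  have hIa : IntegrableOn (fun x => min (invLomaxPdf a x) (invLomaxPdf b x)) (Ioi c) :=
    (invLomax_integrableOn_Ioi ha hc).congr_fun hmin2.symm measurableSet_Ioi
  rw [← Ioc_union_Ioi_eq_Ioi hc.le,
      setIntegral_union (Ioc_disjoint_Ioi le_rfl) measurableSet_Ioi hIb hIa,
      setIntegral_congr_fun measurableSet_Ioc hmin1,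
      setIntegral_congr_fun measurableSet_Ioi hmin2,
      invLomax_integral_Ioc hb hc, invLomax_integral_Ioi ha hc]
  have hcb : invLomaxCdf b c = (a/b) ^ (-(a/(a-b))) := by
    rw [invLomaxCdf, if_pos hc, hct, hepow,
      show a*b/(a-b) * -(1/b) = -(a/(a-b)) by field_simp]
  have hca : invLomaxCdf a c = (a/b) ^ (-(b/(a-b))) := by
    rw [invLomaxCdf, if_pos hc, hct, hepow,
      show a*b/(a-b) * -(1/a) = -(b/(a-b)) by field_simp]
  rw [hcb, hca]; ring

/-- Weitzman's overlap coefficient of two inverse Lomax densities equals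
`1 − R^(1/(1−R))·|1 − 1/R|` where `R = α₁/α₂ ≠ 1`. -/
theorem invLomax_weitzman (α₁ α₂ : ℝ) (h₁ : 0 < α₁) (h₂ : 0 < α₂) (hne : α₁ ≠ α₂)
    (R : ℝ) (hR : R = α₁ / α₂) :
    ∫ x in Set.Ioi (0 : ℝ), min (invLomaxPdf α₁ x) (invLomaxPdf α₂ x)
      = 1 - R ^ (1 / (1 - R)) * |1 - 1 / R| := by
  subst hR
  have hR0 : (0:ℝ) < α₁/α₂ := by positivity
  rcases lt_or_gt_of_ne hne with h | h
  · -- α₁ < α₂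
    have hd : 0 < α₂ - α₁ := sub_pos.mpr h
    have key := invLomax_weitzman_aux h₁ h
    simp_rw [fun x => min_comm (invLomaxPdf α₁ x) (invLomaxPdf α₂ x)]
    rw [key]
    have hS : ∀ q : ℝ, (α₂/α₁) ^ q = (α₁/α₂) ^ (-q) := fun q => by
      rw [show α₂/α₁ = (α₁/α₂) ^ (-(1:ℝ)) by rw [Real.rpow_neg_one, inv_div],
        ← Real.rpow_mul hR0.le, neg_one_mul]
    rw [hS, hS, neg_neg, neg_neg]
    have hE : 1/(1 - α₁/α₂) = α₂/(α₂-α₁) := by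
      rw [div_eq_div_iff (by intro hq; apply hd.ne'; field_simp at hq ⊢; linarith) hd.ne']
      field_simp
    have hE2 : α₁/(α₂-α₁) = α₂/(α₂-α₁) + (-1) := by field_simp; ring
    have habs : |1 - 1/(α₁/α₂)| = α₂/α₁ - 1 := by
      rw [one_div_div, abs_of_neg (by rw [sub_neg]; exact (one_lt_div h₁).mpr h), neg_sub]
    rw [habs, hE, hE2, Real.rpow_add hR0, Real.rpow_neg_one, inv_div]
    ring
  · -- α₂ < α₁
    have hd : 0 < α₁ - α₂ := sub_pos.mpr h
    rw [invLomax_weitzman_aux h₂ h]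
    have hE : 1/(1 - α₁/α₂) = -(α₂/(α₁-α₂)) := by
      rw [div_eq_iff (by intro hq; apply hd.ne'; field_simp at hq ⊢; linarith)]
      field_simp
      ring
    have hE2 : -(α₁/(α₁-α₂)) = -(α₂/(α₁-α₂)) + (-1) := by field_simp; ring
    have habs : |1 - 1/(α₁/α₂)| = 1 - α₂/α₁ := by
      rw [one_div_div, abs_of_pos (by rw [sub_pos]; exact (div_lt_one h₁).mpr h)]
    rw [habs, hE, hE2, Real.rpow_add hR0, Real.rpow_neg_one, inv_div]
    ring
end

section
/- For all α₁, α₂ > 0, the Kullback–Leibler divergence between the two inverse Lomax densities satisfies ∫₀^∞ f(x; α₁)·log(f(x; α₁)/f(x; α₂)) dx = R − 1 − log R, where R = α₁/α₂. -/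
open MeasureTheory

lemma integral_id_mul_exp_neg : ∫ x in Set.Ioi (0 : ℝ), x * Real.exp (-x) = 1 := by
  have h := Real.Gamma_eq_integral (by norm_num : (0:ℝ) < 2)
  rw [Real.Gamma_two] at h
  rw [show (fun x : ℝ => x * Real.exp (-x)) = fun x : ℝ => Real.exp (-x) * x ^ ((2:ℝ) - 1) by
    funext x
    rw [show (2:ℝ) - 1 = 1 by norm_num, Real.rpow_one, mul_comm]]
  exact h.symm

lemma integrableOn_id_mul_exp_neg :
    IntegrableOn (fun x : ℝ => x * Real.exp (-x)) (Set.Ioi 0) := by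
  have h := Real.GammaIntegral_convergent (by norm_num : (0:ℝ) < 2)
  refine h.congr_fun (fun x _ => ?_) measurableSet_Ioi
  dsimp only
  rw [show (2:ℝ) - 1 = 1 by norm_num, Real.rpow_one, mul_comm]

/-- The Kullback–Leibler divergence between two inverse Lomax densities equals
`R − 1 − log R`, where `R = α₁/α₂`. -/
theorem invLomax_kl (α₁ α₂ : ℝ) (h₁ : 0 < α₁) (h₂ : 0 < α₂)
    (R : ℝ) (hR : R = α₁ / α₂) :
    ∫ x in Set.Ioi (0 : ℝ),
        invLomaxPdf α₁ x * Real.log (invLomaxPdf α₁ x / invLomaxPdf α₂ x)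
      = R - 1 - Real.log R := by
  have hR0 : 0 < R := by rw [hR]; positivity
  set F : ℝ → ℝ := fun x => (1/α₁) * Real.log (1 + 1/x) with hF
  set F' : ℝ → ℝ := fun x => -(1/(α₁ * x^2) * (1 + 1/x)⁻¹) with hF'
  set g : ℝ → ℝ := fun u => Real.exp (-u) * (-Real.log R + (R - 1) * u) with hg
  -- derivative
  have hderiv : ∀ x ∈ Set.Ioi (0:ℝ), HasDerivWithinAt F (F' x) (Set.Ioi 0) x := by
    intro x hx
    have hx0 : (0:ℝ) < x := hx
    have ht0 : (0:ℝ) < 1 + 1/x := by positivity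
    have h1 : HasDerivAt (fun x : ℝ => 1 + 1/x) (-(x^2)⁻¹) x := by
      simpa [one_div] using ((hasDerivAt_inv hx0.ne').const_add 1)
    have h2 := (h1.log ht0.ne').const_mul (1/α₁)
    have heq : (1/α₁) * (-(x^2)⁻¹ / (1 + 1/x)) = F' x := by
      simp only [hF']
      field_simp
    rw [← heq]
    exact h2.hasDerivWithinAt
  -- injectivity
  have hinj : Set.InjOn F (Set.Ioi 0) := by
    intro x hx y hy hxy
    have hx0 : (0:ℝ) < x := hx
    have hy0 : (0:ℝ) < y := hy
    have htx : (0:ℝ) < 1 + 1/x := by positivity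
    have hty : (0:ℝ) < 1 + 1/y := by positivity
    have hlog : Real.log (1 + 1/x) = Real.log (1 + 1/y) := by
      have h' := hxy
      simp only [hF] at h'
      have hα : (1/α₁ : ℝ) ≠ 0 := by positivity
      exact mul_left_cancel₀ hα h'
    have h2 := Real.log_injOn_pos (Set.mem_Ioi.2 htx) (Set.mem_Ioi.2 hty) hlog
    have h1x : x⁻¹ = y⁻¹ := by
      have : 1/x = 1/y := by linarith
      simpa [one_div] using this
    exact inv_injective h1x
  -- image
  have himg : F '' Set.Ioi 0 = Set.Ioi 0 := by
    ext u
    constructor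
    · rintro ⟨x, hx, rfl⟩
      have hx0 : (0:ℝ) < x := hx
      have : (1:ℝ) < 1 + 1/x := by
        have : (0:ℝ) < 1/x := by positivity
        linarith
      have hlp := Real.log_pos this
      simp only [hF, Set.mem_Ioi]
      exact mul_pos (by positivity) hlp
    · intro hu
      have hu0 : (0:ℝ) < u := hu
      have hexp1 : (1:ℝ) < Real.exp (α₁ * u) := by
        rw [show (1:ℝ) = Real.exp 0 by simp]
        exact Real.exp_lt_exp.2 (by positivity)
      refine ⟨(Real.exp (α₁ * u) - 1)⁻¹, Set.mem_Ioi.2 (inv_pos.2 (by linarith)), ?_⟩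
      simp only [hF, one_div, inv_inv]
      rw [show 1 + (Real.exp (α₁ * u) - 1) = Real.exp (α₁ * u) by ring, Real.log_exp]
      field_simp
  -- change of variables
  have hchg := integral_image_eq_integral_abs_deriv_smul measurableSet_Ioi hderiv hinj g
  rw [himg] at hchg
  -- pointwise identity of the integrand
  have heq : ∀ x ∈ Set.Ioi (0:ℝ),
      invLomaxPdf α₁ x * Real.log (invLomaxPdf α₁ x / invLomaxPdf α₂ x)
        = |F' x| • g (F x) := by
    intro x hx
    have hx0 : (0:ℝ) < x := hx
    have ht0 : (0:ℝ) < 1 + 1/x := by positivity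
    have habs : |F' x| = 1/(α₁ * x^2) * (1 + 1/x)⁻¹ := by
      simp only [hF', abs_neg]
      exact abs_of_pos (by positivity)
    have hexp : Real.exp (-F x) = (1 + 1/x) ^ (-(1/α₁) : ℝ) := by
      rw [Real.rpow_def_of_pos ht0]
      congr 1
      simp only [hF]
      ring
    have hA : invLomaxPdf α₁ x = |F' x| * Real.exp (-F x) := by
      rw [habs, hexp, invLomaxPdf,
        show (-(1 + 1/α₁) : ℝ) = (-1) + (-(1/α₁)) by ring, Real.rpow_add ht0,
        Real.rpow_neg_one]
      ring
    have hpos : ∀ α : ℝ, 0 < α → 0 < invLomaxPdf α x := by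
      intro α hα
      exact mul_pos (by positivity) (Real.rpow_pos_of_pos ht0 _)
    have hlogp : ∀ α : ℝ, 0 < α →
        Real.log (invLomaxPdf α x)
          = -(Real.log α + Real.log (x^2)) + (-(1 + 1/α)) * Real.log (1 + 1/x) := by
      intro α hα
      rw [invLomaxPdf, Real.log_mul (by positivity) (Real.rpow_pos_of_pos ht0 _).ne',
        Real.log_rpow ht0, one_div, Real.log_inv, Real.log_mul hα.ne' (by positivity)]
    have hlogR : Real.log R = Real.log α₁ - Real.log α₂ := by
      rw [hR, Real.log_div h₁.ne' h₂.ne']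
    have hlogAB : Real.log (invLomaxPdf α₁ x / invLomaxPdf α₂ x)
        = -Real.log R + (1/α₂ - 1/α₁) * Real.log (1 + 1/x) := by
      rw [Real.log_div (hpos _ h₁).ne' (hpos _ h₂).ne', hlogp _ h₁, hlogp _ h₂, hlogR]
      ring
    have hkey : (R - 1) * (1/α₁) = 1/α₂ - 1/α₁ := by
      rw [hR]
      field_simp
    calc invLomaxPdf α₁ x * Real.log (invLomaxPdf α₁ x / invLomaxPdf α₂ x)
        = (|F' x| * Real.exp (-F x)) *
            (-Real.log R + (1/α₂ - 1/α₁) * Real.log (1 + 1/x)) := by rw [hlogAB, hA]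
      _ = (|F' x| * Real.exp (-F x)) *
            (-Real.log R + ((R - 1) * (1/α₁)) * Real.log (1 + 1/x)) := by rw [hkey]
      _ = |F' x| • g (F x) := by
          simp only [hg, hF, smul_eq_mul]
          ring
  rw [setIntegral_congr_fun measurableSet_Ioi heq, ← hchg]
  -- compute the integral of g on (0, ∞)
  have hint1 : IntegrableOn (fun u : ℝ => Real.exp (-u)) (Set.Ioi 0) := by
    simpa using exp_neg_integrableOn_Ioi 0 one_pos
  have hint2 := integrableOn_id_mul_exp_neg
  have hgsplit : ∀ u : ℝ, g u
      = (-Real.log R) * Real.exp (-u) + (R - 1) * (u * Real.exp (-u)) := by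
    intro u
    simp only [hg]
    ring
  rw [setIntegral_congr_fun measurableSet_Ioi (fun u _ => hgsplit u),
    integral_add (hint1.const_mul _) (hint2.const_mul _),
    integral_const_mul, integral_const_mul, integral_exp_neg_Ioi_zero,
    integral_id_mul_exp_neg]
  ring
end

section
/- For all α₁, α₂ > 0, the symmetrized Kullback–Leibler divergence between the two inverse Lomax densities satisfies KL(f₁‖f₂) = ∫₀^∞ (f(x; α₁) − f(x; α₂))·log(f(x; α₁)/f(x; α₂)) dx = (R − 1)²/R, and consequently the overlap measure Λ = 1/(1 + KL(f₁‖f₂)) equals R/(R² − R + 1), where R = α₁/α₂. -/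
open MeasureTheory

open Real Set

lemma cov_Ioi (g : ℝ → ℝ) :
    ∫ x in Ioi (0:ℝ), g x
      = ∫ u in Ioi (0:ℝ), |(-(Real.exp u) / (Real.exp u - 1)^2)| • g ((Real.exp u - 1)⁻¹) := by
  have himg : (fun u => (Real.exp u - 1)⁻¹) '' Ioi (0:ℝ) = Ioi (0:ℝ) := by
    ext x
    constructor
    · rintro ⟨u, hu, rfl⟩
      have : (1:ℝ) < Real.exp u := by
        rw [← Real.exp_zero]; exact Real.exp_lt_exp.2 hu
      exact mem_Ioi.2 (inv_pos.2 (by linarith))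
    · intro hx
      have hx' : (0:ℝ) < x := hx
      refine ⟨Real.log (1 + 1/x), ?_, ?_⟩
      · exact mem_Ioi.2 (Real.log_pos (by rw [lt_add_iff_pos_right]; positivity))
      · show (Real.exp (Real.log (1 + 1/x)) - 1)⁻¹ = x
        rw [Real.exp_log (by positivity)]
        field_simp
        ring
  have hderiv : ∀ u ∈ Ioi (0:ℝ), HasDerivWithinAt (fun u => (Real.exp u - 1)⁻¹)
      (-(Real.exp u) / (Real.exp u - 1)^2) (Ioi (0:ℝ)) u := by
    intro u hu
    have h1 : (1:ℝ) < Real.exp u := by rw [← Real.exp_zero]; exact Real.exp_lt_exp.2 hu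
    have : HasDerivAt (fun u => (Real.exp u - 1)⁻¹) (-(Real.exp u) / (Real.exp u - 1)^2) u := by
      have hne : Real.exp u - 1 ≠ 0 := by linarith
      exact ((Real.hasDerivAt_exp u).sub_const 1).inv hne
    exact this.hasDerivWithinAt
  have hinj : InjOn (fun u => (Real.exp u - 1)⁻¹) (Ioi (0:ℝ)) := by
    intro a _ b _ h
    have := inv_injective h
    have := sub_left_injective this
    exact Real.exp_injective this
  conv_lhs => rw [← himg]
  exact integral_image_eq_integral_abs_deriv_smul measurableSet_Ioi hderiv hinj g

lemma invLomax_exp (α : ℝ) (hα : 0 < α) {u : ℝ} (hu : 0 < u) :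
    invLomaxPdf α ((Real.exp u - 1)⁻¹)
      = (Real.exp u - 1)^2 * ((1/α) * Real.exp (-((1 + 1/α) * u))) := by
  have h1 : (1:ℝ) < Real.exp u := by rw [← Real.exp_zero]; exact Real.exp_lt_exp.2 hu
  have hne : Real.exp u - 1 ≠ 0 := by linarith
  unfold invLomaxPdf
  rw [one_div ((Real.exp u - 1)⁻¹), inv_inv,
    show (1:ℝ) + (Real.exp u - 1) = Real.exp u from by ring,
    Real.rpow_def_of_pos (Real.exp_pos u), Real.log_exp,
    show u * -(1 + 1/α) = -((1 + 1/α) * u) from by ring]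
  field_simp

lemma integral_exp_rate {a : ℝ} (ha : 0 < a) :
    ∫ u in Ioi (0:ℝ), Real.exp (-(a*u)) = 1/a := by
  have := integral_rpow_mul_exp_neg_mul_Ioi (a := 1) (r := a) one_pos ha
  simp only [sub_self, Real.rpow_zero, one_mul, Real.Gamma_one, mul_one, one_div] at this
  rw [this, Real.rpow_one, one_div]

lemma integral_mul_exp_rate {a : ℝ} (ha : 0 < a) :
    ∫ u in Ioi (0:ℝ), u * Real.exp (-(a*u)) = 1/a^2 := by
  have := integral_rpow_mul_exp_neg_mul_Ioi (a := 2) (r := a) two_pos ha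
  rw [Real.Gamma_two, mul_one] at this
  rw [show (∫ u in Ioi (0:ℝ), u * Real.exp (-(a*u)))
      = ∫ t in Ioi (0:ℝ), t ^ ((2:ℝ)-1) * Real.exp (-(a*t)) from
    setIntegral_congr_fun measurableSet_Ioi (fun t ht => by norm_num), this]
  rw [show ((2:ℝ)) = ((2:ℕ):ℝ) by norm_num, Real.rpow_natCast, div_pow, one_pow]

lemma integrable_exp_rate {a : ℝ} (ha : 0 < a) :
    IntegrableOn (fun u => Real.exp (-(a*u))) (Ioi (0:ℝ)) := by
  have := integrableOn_rpow_mul_exp_neg_mul_rpow (p:=1) (s:=0) (b:=a) (by norm_num) one_pos ha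
  refine this.congr_fun (fun t ht => by simp [Real.rpow_one]) measurableSet_Ioi

lemma integrable_mul_exp_rate {a : ℝ} (ha : 0 < a) :
    IntegrableOn (fun u => u * Real.exp (-(a*u))) (Ioi (0:ℝ)) := by
  have := integrableOn_rpow_mul_exp_neg_mul_rpow (p:=1) (s:=1) (b:=a) (by norm_num) one_pos ha
  refine this.congr_fun (fun t ht => by simp [Real.rpow_one]) measurableSet_Ioi

lemma integral_lin_exp {a : ℝ} (p q : ℝ) (ha : 0 < a) :
    ∫ u in Ioi (0:ℝ), (p * Real.exp (-(a*u)) + q * (u * Real.exp (-(a*u)))) = p/a + q/a^2 := by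
  rw [integral_add ((integrable_exp_rate ha).const_mul p)
      ((integrable_mul_exp_rate ha).const_mul q),
    integral_const_mul, integral_const_mul, integral_exp_rate ha, integral_mul_exp_rate ha]
  ring

lemma transformed_integrand (α₁ α₂ : ℝ) (h₁ : 0 < α₁) (h₂ : 0 < α₂) {u : ℝ} (hu : 0 < u) :
    |(-(Real.exp u) / (Real.exp u - 1)^2)|
      * ((invLomaxPdf α₁ ((Real.exp u - 1)⁻¹) - invLomaxPdf α₂ ((Real.exp u - 1)⁻¹))
        * Real.log (invLomaxPdf α₁ ((Real.exp u - 1)⁻¹) / invLomaxPdf α₂ ((Real.exp u - 1)⁻¹)))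
      = ((1/α₁) * Real.exp (-(α₁⁻¹ * u)) - (1/α₂) * Real.exp (-(α₂⁻¹ * u)))
        * (Real.log (α₂/α₁) + (1/α₂ - 1/α₁) * u) := by
  have h1 : (1:ℝ) < Real.exp u := by rw [← Real.exp_zero]; exact Real.exp_lt_exp.2 hu
  have hS : (0:ℝ) < (Real.exp u - 1)^2 := pow_pos (by linarith) 2
  have hSne : ((Real.exp u - 1)^2 : ℝ) ≠ 0 := ne_of_gt hS
  rw [invLomax_exp α₁ h₁ hu, invLomax_exp α₂ h₂ hu]
  rw [mul_div_mul_left _ _ hSne]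
  have hne1 : 1/α₁ * Real.exp (-((1 + 1/α₁) * u)) ≠ 0 :=
    (mul_pos (one_div_pos.2 h₁) (Real.exp_pos _)).ne'
  have hne2 : 1/α₂ * Real.exp (-((1 + 1/α₂) * u)) ≠ 0 :=
    (mul_pos (one_div_pos.2 h₂) (Real.exp_pos _)).ne'
  have hlog : Real.log ((1/α₁ * Real.exp (-((1 + 1/α₁) * u)))
      / (1/α₂ * Real.exp (-((1 + 1/α₂) * u))))
      = Real.log (α₂/α₁) + (1/α₂ - 1/α₁) * u := by
    rw [Real.log_div hne1 hne2,
      Real.log_mul (one_div_pos.2 h₁).ne' (Real.exp_ne_zero _),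
      Real.log_mul (one_div_pos.2 h₂).ne' (Real.exp_ne_zero _),
      Real.log_exp, Real.log_exp, Real.log_div h₂.ne' h₁.ne',
      one_div, one_div, Real.log_inv, Real.log_inv]
    ring
  rw [hlog, abs_div, abs_neg, abs_of_pos (Real.exp_pos u), abs_of_pos hS]
  have he₁ : Real.exp u * Real.exp (-((1 + 1/α₁) * u)) = Real.exp (-(α₁⁻¹ * u)) := by
    rw [← Real.exp_add]; congr 1; field_simp; ring
  have he₂ : Real.exp u * Real.exp (-((1 + 1/α₂) * u)) = Real.exp (-(α₂⁻¹ * u)) := by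
    rw [← Real.exp_add]; congr 1; field_simp; ring
  rw [← he₁, ← he₂]
  have hne : Real.exp u - 1 ≠ 0 := by linarith
  field_simp

/-- The symmetrized Kullback–Leibler divergence between two inverse Lomax densities
equals `(R − 1)²/R`, and consequently the overlap measure `Λ = 1/(1 + KL)` equals
`R/(R² − R + 1)`, where `R = α₁/α₂`. -/
theorem invLomax_symmKL_and_lambda (α₁ α₂ : ℝ) (h₁ : 0 < α₁) (h₂ : 0 < α₂)
    (R : ℝ) (hR : R = α₁ / α₂) :
    (∫ x in Set.Ioi (0 : ℝ),
        (invLomaxPdf α₁ x - invLomaxPdf α₂ x)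
          * Real.log (invLomaxPdf α₁ x / invLomaxPdf α₂ x))
      = (R - 1) ^ 2 / R ∧
    1 / (1 + ∫ x in Set.Ioi (0 : ℝ),
        (invLomaxPdf α₁ x - invLomaxPdf α₂ x)
          * Real.log (invLomaxPdf α₁ x / invLomaxPdf α₂ x))
      = R / (R ^ 2 - R + 1) := by
  have ha₁ : (0:ℝ) < α₁⁻¹ := inv_pos.2 h₁
  have ha₂ : (0:ℝ) < α₂⁻¹ := inv_pos.2 h₂
  set c := Real.log (α₂/α₁) with hc
  set d := 1/α₂ - 1/α₁ with hd
  have hKL : (∫ x in Set.Ioi (0 : ℝ),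
        (invLomaxPdf α₁ x - invLomaxPdf α₂ x)
          * Real.log (invLomaxPdf α₁ x / invLomaxPdf α₂ x))
      = (R - 1) ^ 2 / R := by
    rw [cov_Ioi (fun x => (invLomaxPdf α₁ x - invLomaxPdf α₂ x)
          * Real.log (invLomaxPdf α₁ x / invLomaxPdf α₂ x))]
    rw [setIntegral_congr_fun (g := fun u =>
        ((c/α₁) * Real.exp (-(α₁⁻¹*u)) + (d/α₁) * (u * Real.exp (-(α₁⁻¹*u))))
        - ((c/α₂) * Real.exp (-(α₂⁻¹*u)) + (d/α₂) * (u * Real.exp (-(α₂⁻¹*u)))))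
      measurableSet_Ioi (fun u hu => by
        have h := transformed_integrand α₁ α₂ h₁ h₂ (mem_Ioi.1 hu)
        simp only [smul_eq_mul]
        rw [h, hc, hd]
        ring)]
    have I₁ : IntegrableOn (fun u => (c/α₁) * Real.exp (-(α₁⁻¹*u))
        + (d/α₁) * (u * Real.exp (-(α₁⁻¹*u)))) (Ioi (0:ℝ)) :=
      ((integrable_exp_rate ha₁).const_mul _).add ((integrable_mul_exp_rate ha₁).const_mul _)
    have I₂ : IntegrableOn (fun u => (c/α₂) * Real.exp (-(α₂⁻¹*u))
        + (d/α₂) * (u * Real.exp (-(α₂⁻¹*u)))) (Ioi (0:ℝ)) :=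
      ((integrable_exp_rate ha₂).const_mul _).add ((integrable_mul_exp_rate ha₂).const_mul _)
    rw [integral_sub I₁ I₂, integral_lin_exp _ _ ha₁, integral_lin_exp _ _ ha₂]
    rw [hd, hR]
    field_simp
    ring
  refine ⟨hKL, ?_⟩
  rw [hKL]
  have hR0 : (0:ℝ) < R := hR ▸ div_pos h₁ h₂
  have hden : (0:ℝ) < R^2 - R + 1 := by nlinarith
  rw [show (1:ℝ) + (R-1)^2/R = (R^2 - R + 1)/R from by field_simp; ring, one_div_div]
end

section
/- Weitzman's overlap measure satisfies the reciprocity property: for every R > 0 with R ≠ 1, Δ(1/R) = Δ(R). -/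
/-- Weitzman's overlap measure as a function of the ratio of shape parameters. -/
noncomputable def deltaOVL (R : ℝ) : ℝ := 1 - R ^ (1 / (1 - R)) * |1 - 1 / R|

/-- Reciprocity of Weitzman's overlap measure: `Δ(1/R) = Δ(R)` for `R > 0`, `R ≠ 1`. -/
theorem deltaOVL_reciprocity (R : ℝ) (hR : 0 < R) (hR1 : R ≠ 1) :
    deltaOVL (1 / R) = deltaOVL R := by
  have hR0 : R ≠ 0 := ne_of_gt hR
  have h1R : (1:ℝ) - R ≠ 0 := sub_ne_zero.mpr (Ne.symm hR1)
  have hR1' : R - 1 ≠ 0 := sub_ne_zero.mpr hR1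
  unfold deltaOVL
  have hpow : (1 / R) ^ (1 / (1 - 1 / R)) = R ^ (1 / (1 - R)) / R := by
    have he2 : 1 / (1 - 1 / R) = -(1 / (1 - R) - 1) := by
      field_simp
      ring
    rw [he2, one_div R, Real.inv_rpow hR.le, ← Real.rpow_neg hR.le, neg_neg,
      Real.rpow_sub hR, Real.rpow_one]
  rw [hpow]
  have habs : |1 - 1 / (1 / R)| = |1 - R| := by rw [one_div_one_div]
  have habs2 : |1 - 1 / R| = |1 - R| / R := by
    rw [one_sub_div hR0, abs_div, abs_of_pos hR, abs_sub_comm]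
  rw [habs, habs2]
  ring
end

section
/- Weitzman's overlap measure Δ is strictly monotonically increasing on the interval (0, 1) and strictly monotonically decreasing on the interval (1, ∞). -/
noncomputable def gOVL (R : ℝ) : ℝ := (R / (1 - R)) * Real.log R + Real.log (1 - R)

lemma gOVL_hasDerivAt {x : ℝ} (hx0 : 0 < x) (hx1 : x ≠ 1) :
    HasDerivAt gOVL (Real.log x / (1 - x) ^ 2) x := by
  have h1x : (1 : ℝ) - x ≠ 0 := sub_ne_zero.mpr (Ne.symm hx1)
  have h1 : HasDerivAt (fun R : ℝ => R / (1 - R)) (1 / (1 - x) ^ 2) x := by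
    have := (hasDerivAt_id x).div ((hasDerivAt_id x).const_sub 1) h1x
    refine this.congr_deriv ?_
    simp only [id]
    field_simp
    ring
  have h2 : HasDerivAt Real.log x⁻¹ x := Real.hasDerivAt_log (ne_of_gt hx0)
  have hmul := h1.mul h2
  have h3 : HasDerivAt (fun R : ℝ => Real.log (1 - R)) (-1 / (1 - x)) x :=
    ((hasDerivAt_id x).const_sub 1).log h1x
  have := hmul.add h3
  refine this.congr_deriv ?_
  field_simp
  ring

lemma deltaOVL_eq {R : ℝ} (hR0 : 0 < R) (hR1 : R ≠ 1) :
    deltaOVL R = 1 - Real.exp (gOVL R) := by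
  have h1R : (1 : ℝ) - R ≠ 0 := sub_ne_zero.mpr hR1.symm
  have habs : |1 - 1 / R| = |1 - R| / R := by
    have h : 1 - 1 / R = (R - 1) / R := by field_simp
    rw [h, abs_div, abs_of_pos hR0, abs_sub_comm]
  have e1 : Real.exp (R / (1 - R) * Real.log R) * R = Real.exp (1 / (1 - R) * Real.log R) := by
    have harg : 1 / (1 - R) * Real.log R = R / (1 - R) * Real.log R + Real.log R := by
      field_simp
      ring
    rw [harg, Real.exp_add, Real.exp_log hR0]
  unfold deltaOVL gOVL
  rw [habs, Real.rpow_def_of_pos hR0, mul_comm (Real.log R),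
    show Real.log (1 - R) = Real.log |1 - R| from (Real.log_abs _).symm, Real.exp_add,
    Real.exp_log (abs_pos.mpr h1R), ← e1]
  field_simp

/-- Weitzman's overlap measure is strictly increasing on `(0, 1)` and strictly
decreasing on `(1, ∞)`. -/
theorem deltaOVL_monotone :
    StrictMonoOn deltaOVL (Set.Ioo 0 1) ∧ StrictAntiOn deltaOVL (Set.Ioi 1) := by
  constructor
  · have hg : StrictAntiOn gOVL (Set.Ioo 0 1) := by
      apply strictAntiOn_of_deriv_neg (convex_Ioo 0 1)
      · exact fun x hx =>
          ((gOVL_hasDerivAt hx.1 (ne_of_lt hx.2)).differentiableAt).continuousAt.continuousWithinAt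
      · intro x hx
        rw [interior_Ioo] at hx
        rw [(gOVL_hasDerivAt hx.1 (ne_of_lt hx.2)).deriv]
        exact div_neg_of_neg_of_pos (Real.log_neg hx.1 hx.2)
          (pow_pos (by linarith [hx.2] : (0:ℝ) < 1 - x) 2)
    intro a ha b hb hab
    rw [deltaOVL_eq ha.1 (ne_of_lt ha.2), deltaOVL_eq hb.1 (ne_of_lt hb.2)]
    have := Real.exp_lt_exp.mpr (hg ha hb hab)
    linarith
  · have hg : StrictMonoOn gOVL (Set.Ioi 1) := by
      apply strictMonoOn_of_deriv_pos (convex_Ioi 1)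
      · exact fun x hx =>
          ((gOVL_hasDerivAt (by linarith [Set.mem_Ioi.mp hx] : (0:ℝ) < x)
            (ne_of_gt (Set.mem_Ioi.mp hx))).differentiableAt).continuousAt.continuousWithinAt
      · intro x hx
        rw [interior_Ioi] at hx
        have hx1 : (1:ℝ) < x := hx
        rw [(gOVL_hasDerivAt (by linarith) (ne_of_gt hx1)).deriv]
        have hsq : (0:ℝ) < (1 - x) ^ 2 := by
          have h : ((1:ℝ) - x) ^ 2 = (x - 1) ^ 2 := by ring
          rw [h]; exact pow_pos (by linarith) 2
        exact div_pos (Real.log_pos hx1) hsq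
    intro a ha b hb hab
    have ha1 : (1:ℝ) < a := ha
    have hb1 : (1:ℝ) < b := hb
    rw [deltaOVL_eq (by linarith) (ne_of_gt ha1), deltaOVL_eq (by linarith) (ne_of_gt hb1)]
    have := Real.exp_lt_exp.mpr (hg ha hb hab)
    linarith
end

section
/- Let n₁ ≥ 1 and n₂ ≥ 3 be integers, α₁, α₂ > 0, and let U and V be independent random variables with U distributed as Gamma with shape n₁ and rate n₁/α₁ and V distributed as Gamma with shape n₂ and rate n₂/α₂. Then Var(U/V) = R²·n₂²·(n₁ + n₂ − 1)/(n₁·(n₂ − 1)²·(n₂ − 2)), where R = α₁/α₂; consequently the unbiased estimator R* = (n₂ − 1)/n₂ · (U/V) satisfies Var(R*) = R²·(n₁ + n₂ − 1)/(n₁·(n₂ − 2)). -/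
open MeasureTheory ProbabilityTheory

open MeasureTheory ProbabilityTheory Real Set
open scoped ENNReal NNReal

lemma gamma_moment_aux {a r s : ℝ} (ha : 0 < a) (hr : 0 < r) (has : 0 < a + s) (hs : s ≠ 0) :
    ∫ x, x ^ s ∂(gammaMeasure a r) = Real.Gamma (a + s) / (Real.Gamma a * r ^ s) := by
  have hmeas : gammaMeasure a r
      = volume.withDensity (fun x => (Real.toNNReal (gammaPDFReal a r x) : ℝ≥0∞)) := rfl
  rw [hmeas, integral_withDensity_eq_integral_smul
      ((measurable_gammaPDFReal a r).real_toNNReal)]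
  have hsmul : ∀ x : ℝ, (gammaPDFReal a r x).toNNReal • x ^ s
      = gammaPDFReal a r x * x ^ s := by
    intro x
    rw [NNReal.smul_def, smul_eq_mul, Real.coe_toNNReal _ (gammaPDFReal_nonneg ha hr x)]
  simp_rw [hsmul]
  have hzero : ∀ x ∉ Ioi (0:ℝ), gammaPDFReal a r x * x ^ s = 0 := by
    intro x hx
    have hx' : x ≤ 0 := le_of_not_gt hx
    rcases lt_or_eq_of_le hx' with h | h
    · simp [gammaPDFReal, not_le.mpr h]
    · subst h; rw [Real.zero_rpow hs, mul_zero]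
  rw [← setIntegral_eq_integral_of_forall_compl_eq_zero hzero]
  rw [setIntegral_congr_fun measurableSet_Ioi (g := fun x =>
        r ^ a / Real.Gamma a * (x ^ (a + s - 1) * Real.exp (-(r * x))))
      (fun x hx => by
        have hx0 : (0:ℝ) < x := hx
        simp only [gammaPDFReal, if_pos hx0.le]
        rw [show a + s - 1 = (a - 1) + s by ring, Real.rpow_add hx0]
        ring)]
  rw [integral_const_mul, integral_rpow_mul_exp_neg_mul_Ioi has hr]
  rw [div_rpow zero_le_one hr.le, one_rpow, Real.rpow_add hr]
  have h1 : Real.Gamma a ≠ 0 := (Real.Gamma_pos_of_pos ha).ne'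
  have h2 : r ^ a ≠ 0 := (Real.rpow_pos_of_pos hr a).ne'
  have h3 : r ^ s ≠ 0 := (Real.rpow_pos_of_pos hr s).ne'
  field_simp

lemma gamma_mean {a r : ℝ} (ha : 0 < a) (hr : 0 < r) :
    ∫ x, x ∂(gammaMeasure a r) = a / r := by
  have h := gamma_moment_aux ha hr (by linarith : 0 < a + 1) one_ne_zero
  simp_rw [Real.rpow_one] at h
  rw [h, Real.Gamma_add_one ha.ne']
  have h1 : Real.Gamma a ≠ 0 := (Real.Gamma_pos_of_pos ha).ne'
  field_simp

lemma gamma_sq {a r : ℝ} (ha : 0 < a) (hr : 0 < r) :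
    ∫ x, x ^ 2 ∂(gammaMeasure a r) = a * (a + 1) / r ^ 2 := by
  have h := gamma_moment_aux ha hr (by linarith : 0 < a + 2) two_ne_zero
  have hc : ∀ x : ℝ, x ^ (2:ℝ) = x ^ 2 := fun x => by
    rw [show (2:ℝ) = ((2:ℕ):ℝ) by norm_num, Real.rpow_natCast]
  simp_rw [hc] at h
  rw [h, show a + 2 = (a + 1) + 1 by ring,
    Real.Gamma_add_one (by positivity : a + 1 ≠ 0), Real.Gamma_add_one ha.ne']
  have h1 : Real.Gamma a ≠ 0 := (Real.Gamma_pos_of_pos ha).ne'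
  field_simp

lemma gamma_inv {a r : ℝ} (ha : 1 < a) (hr : 0 < r) :
    ∫ x, (x)⁻¹ ∂(gammaMeasure a r) = r / (a - 1) := by
  have h := gamma_moment_aux (by linarith : 0 < a) hr
    (by linarith : 0 < a + (-1)) (by norm_num)
  have hc : ∀ x : ℝ, x ^ (-1:ℝ) = x⁻¹ := fun x => by
    rw [show (-1:ℝ) = ((-1:ℤ):ℝ) by norm_num, Real.rpow_intCast, zpow_neg_one]
  simp_rw [hc] at h
  have hGa : Real.Gamma a = (a - 1) * Real.Gamma (a - 1) := by
    conv_lhs => rw [show a = (a - 1) + 1 by ring]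
    rw [Real.Gamma_add_one (by linarith : (0:ℝ) < a - 1).ne']
  rw [h, show a + (-1) = a - 1 by ring, hGa]
  have h1 : Real.Gamma (a - 1) ≠ 0 :=
    (Real.Gamma_pos_of_pos (by linarith)).ne'
  have h2 : a - 1 ≠ 0 := (by linarith : (0:ℝ) < a - 1).ne'
  field_simp

lemma gamma_inv_sq {a r : ℝ} (ha : 2 < a) (hr : 0 < r) :
    ∫ x, (x ^ 2)⁻¹ ∂(gammaMeasure a r) = r ^ 2 / ((a - 1) * (a - 2)) := by
  have h := gamma_moment_aux (by linarith : 0 < a) hr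
    (by linarith : 0 < a + (-2)) (by norm_num)
  have hc : ∀ x : ℝ, x ^ (-2:ℝ) = (x ^ 2)⁻¹ := fun x => by
    rw [show (-2:ℝ) = ((-2:ℤ):ℝ) by norm_num, Real.rpow_intCast,
      show (-2:ℤ) = -(2:ℤ) by norm_num, zpow_neg,
      show ((2:ℤ):ℤ) = ((2:ℕ):ℤ) by norm_num, zpow_natCast]
  simp_rw [hc] at h
  have hGa : Real.Gamma a = (a - 1) * ((a - 2) * Real.Gamma (a - 2)) := by
    conv_lhs => rw [show a = (a - 2) + 1 + 1 by ring]
    rw [Real.Gamma_add_one (by linarith : (0:ℝ) < a - 2 + 1).ne',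
      Real.Gamma_add_one (by linarith : (0:ℝ) < a - 2).ne']
    ring_nf
  rw [h, show a + (-2) = a - 2 by ring, hGa]
  have h1 : Real.Gamma (a - 2) ≠ 0 :=
    (Real.Gamma_pos_of_pos (by linarith)).ne'
  have h2 : a - 1 ≠ 0 := by intro h'; nlinarith
  have h3 : a - 2 ≠ 0 := by intro h'; nlinarith
  have h4 : r ≠ 0 := hr.ne'
  field_simp

/-- If `U ~ Gamma(n₁, n₁/α₁)` and `V ~ Gamma(n₂, n₂/α₂)` are independent, then
`Var(U/V) = R²·n₂²·(n₁ + n₂ − 1)/(n₁·(n₂ − 1)²·(n₂ − 2))` where `R = α₁/α₂`;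
consequently the unbiased estimator `R* = (n₂ − 1)/n₂ · (U/V)` satisfies
`Var(R*) = R²·(n₁ + n₂ − 1)/(n₁·(n₂ − 2))`.  (Here `Var(W) = E[W²] − (E[W])²`.) -/
theorem gamma_ratio_variance {Ω : Type*} [MeasureSpace Ω]
    [IsProbabilityMeasure (ℙ : Measure Ω)]
    (n₁ n₂ : ℕ) (hn₁ : 1 ≤ n₁) (hn₂ : 3 ≤ n₂)
    (α₁ α₂ : ℝ) (h₁ : 0 < α₁) (h₂ : 0 < α₂)
    (U V : Ω → ℝ) (hUV : IndepFun U V)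
    (hU : Measure.map U ℙ = gammaMeasure n₁ (n₁ / α₁))
    (hV : Measure.map V ℙ = gammaMeasure n₂ (n₂ / α₂))
    (R : ℝ) (hR : R = α₁ / α₂) :
    (∫ ω, (U ω / V ω) ^ 2) - (∫ ω, U ω / V ω) ^ 2
      = R ^ 2 * n₂ ^ 2 * ((n₁ : ℝ) + n₂ - 1)
          / (n₁ * ((n₂ : ℝ) - 1) ^ 2 * ((n₂ : ℝ) - 2)) ∧
    (∫ ω, (((n₂ : ℝ) - 1) / n₂ * (U ω / V ω)) ^ 2)
      - (∫ ω, ((n₂ : ℝ) - 1) / n₂ * (U ω / V ω)) ^ 2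
      = R ^ 2 * ((n₁ : ℝ) + n₂ - 1) / (n₁ * ((n₂ : ℝ) - 2)) := by
  have hn₁' : (1:ℝ) ≤ (n₁ : ℝ) := by exact_mod_cast hn₁
  have hn₂' : (3:ℝ) ≤ (n₂ : ℝ) := by exact_mod_cast hn₂
  have ha₁ : (0:ℝ) < n₁ := by linarith
  have ha₂ : (0:ℝ) < n₂ := by linarith
  have hr₁ : (0:ℝ) < (n₁ : ℝ) / α₁ := div_pos ha₁ h₁
  have hr₂ : (0:ℝ) < (n₂ : ℝ) / α₂ := div_pos ha₂ h₂
  -- AE measurability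
  have hUm : AEMeasurable U ℙ := by
    by_contra h
    have h1 : (gammaMeasure n₁ ((n₁:ℝ) / α₁)) Set.univ = 1 :=
      (isProbabilityMeasure_gammaMeasure ha₁ hr₁).measure_univ
    rw [← hU, Measure.map_of_not_aemeasurable h] at h1
    simp at h1
  have hVm : AEMeasurable V ℙ := by
    by_contra h
    have h1 : (gammaMeasure n₂ ((n₂:ℝ) / α₂)) Set.univ = 1 :=
      (isProbabilityMeasure_gammaMeasure ha₂ hr₂).measure_univ
    rw [← hV, Measure.map_of_not_aemeasurable h] at h1
    simp at h1
  -- moments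
  have hEU : ∫ ω, U ω = (n₁ : ℝ) / ((n₁:ℝ) / α₁) := by
    have h := integral_map (φ := U) hUm (f := fun x : ℝ => x)
      aestronglyMeasurable_id
    rw [hU] at h
    rw [← h]
    exact gamma_mean ha₁ hr₁
  have hEU2 : ∫ ω, (U ω) ^ 2 = (n₁:ℝ) * ((n₁:ℝ) + 1) / ((n₁:ℝ) / α₁) ^ 2 := by
    have h := integral_map (φ := U) hUm (f := fun x : ℝ => x ^ 2)
      (measurable_id.pow_const 2).aestronglyMeasurable
    rw [hU] at h
    rw [← h]
    exact gamma_sq ha₁ hr₁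
  have hEVi : ∫ ω, (V ω)⁻¹ = ((n₂:ℝ) / α₂) / ((n₂:ℝ) - 1) := by
    have h := integral_map (φ := V) hVm (f := fun x : ℝ => x⁻¹)
      measurable_inv.aestronglyMeasurable
    rw [hV] at h
    rw [← h]
    exact gamma_inv (by linarith) hr₂
  have hEVi2 : ∫ ω, ((V ω) ^ 2)⁻¹
      = ((n₂:ℝ) / α₂) ^ 2 / (((n₂:ℝ) - 1) * ((n₂:ℝ) - 2)) := by
    have h := integral_map (φ := V) hVm (f := fun x : ℝ => (x ^ 2)⁻¹)
      ((measurable_id.pow_const 2).inv).aestronglyMeasurable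
    rw [hV] at h
    rw [← h]
    exact gamma_inv_sq (by linarith) hr₂
  have hne : ((n₂:ℝ) - 1) ≠ 0 := by intro h; nlinarith
  have hne2 : ((n₂:ℝ) - 2) ≠ 0 := by intro h; nlinarith
  have hn0 : (n₁:ℝ) ≠ 0 := ha₁.ne'
  have hn0' : (n₂:ℝ) ≠ 0 := ha₂.ne'
  have hα1 : α₁ ≠ 0 := h₁.ne'
  have hα2 : α₂ ≠ 0 := h₂.ne'
  -- independence products
  have hI1 : IndepFun U (fun ω => (V ω)⁻¹) ℙ := hUV.comp measurable_id measurable_inv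
  have hI2 : IndepFun (fun ω => (U ω) ^ 2) (fun ω => ((V ω) ^ 2)⁻¹) ℙ :=
    hUV.comp (measurable_id.pow_const 2) ((measurable_id.pow_const 2).inv)
  have hA : ∫ ω, U ω / V ω
      = ((n₁ : ℝ) / ((n₁:ℝ) / α₁)) * (((n₂:ℝ) / α₂) / ((n₂:ℝ) - 1)) := by
    have h := hI1.integral_mul_eq_mul_integral hUm.aestronglyMeasurable
      (hVm.inv).aestronglyMeasurable
    simp_rw [div_eq_mul_inv]
    rw [show (∫ ω, U ω * (V ω)⁻¹) = (∫ ω, U ω) * ∫ ω, (V ω)⁻¹ from h,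
      hEU, hEVi]
    field_simp
  have hB : ∫ ω, (U ω / V ω) ^ 2
      = ((n₁:ℝ) * ((n₁:ℝ) + 1) / ((n₁:ℝ) / α₁) ^ 2)
        * (((n₂:ℝ) / α₂) ^ 2 / (((n₂:ℝ) - 1) * ((n₂:ℝ) - 2))) := by
    have h := hI2.integral_mul_eq_mul_integral (hUm.pow_const 2).aestronglyMeasurable
      ((hVm.pow_const 2).inv).aestronglyMeasurable
    simp_rw [div_pow, div_eq_mul_inv]
    rw [show (∫ ω, (U ω) ^ 2 * ((V ω) ^ 2)⁻¹)
        = (∫ ω, (U ω) ^ 2) * ∫ ω, ((V ω) ^ 2)⁻¹ from h,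
      hEU2, hEVi2]
    field_simp
  constructor
  · rw [hA, hB, hR]
    field_simp
    ring
  · simp_rw [mul_pow]
    rw [integral_const_mul, integral_const_mul, hA, hB, hR]
    field_simp
    ring
end
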